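/- Every infinite-dimensional weakly compactly generated real Banach space has a separable quotient. -/

import Mathlib

open Set Topology

section Biorth

variable {X : Type*} [NormedAddCommGroup X] [NormedSpace ℝ X]

private lemma exists_next (hX : ¬ FiniteDimensional ℝ X) (L : List ((X →L[ℝ] ℝ) × X)) :
    ∃ fx : (X →L[ℝ] ℝ) × X, (∀ p ∈ L, p.1 fx.2 = 0) ∧ fx.1 fx.2 = 1 := by
  have hx : ∃ x : X, x ≠ 0 ∧ ∀ p ∈ L, p.1 x = 0 := by
    by_contra h
    push_neg at h
    apply hX
    let Φ : X →ₗ[ℝ] (Fin L.length → ℝ) := LinearMap.pi (fun i => (L.get i).1)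
    refine FiniteDimensional.of_injective Φ ?_
    rw [← LinearMap.ker_eq_bot, LinearMap.ker_eq_bot']
    intro m hm
    by_contra hm0
    obtain ⟨p, hpL, hpm⟩ := h m hm0
    obtain ⟨i, rfl⟩ := List.mem_iff_get.mp hpL
    exact hpm (congrFun hm i)
  obtain ⟨x, hx0, hxker⟩ := hx
  obtain ⟨g, -, hg⟩ := exists_dual_vector ℝ x (norm_ne_zero_iff.mpr hx0)
  refine ⟨(‖x‖⁻¹ • g, x), hxker, ?_⟩
  have : ‖x‖ ≠ 0 := norm_ne_zero_iff.mpr hx0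
  simp only [ContinuousLinearMap.smul_apply, hg, smul_eq_mul, RCLike.ofReal_real_eq_id, id]
  field_simp

private noncomputable def chain (hX : ¬ FiniteDimensional ℝ X) : ℕ → List ((X →L[ℝ] ℝ) × X)
  | 0 => []
  | n + 1 => Classical.choose (exists_next hX (chain hX n)) :: chain hX n

private lemma chain_suffix (hX : ¬ FiniteDimensional ℝ X) {m n : ℕ} (h : m ≤ n) :
    chain hX m <:+ chain hX n := by
  induction n with
  | zero => simp [Nat.le_zero.mp h]
  | succ n ih =>
    rcases Nat.lt_or_ge m (n+1) with h' | h'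
    · exact (ih (Nat.lt_succ_iff.mp h')).trans (List.suffix_cons _ _)
    · have : m = n + 1 := le_antisymm h h'
      simp [this]

/-- An infinite "triangular" biorthogonal-type system in an infinite-dimensional space. -/
lemma exists_triangular_system (hX : ¬ FiniteDimensional ℝ X) :
    ∃ (f : ℕ → X →L[ℝ] ℝ) (x : ℕ → X),
      (∀ n, f n (x n) = 1) ∧ ∀ m n, m < n → f m (x n) = 0 := by
  let p : ℕ → (X →L[ℝ] ℝ) × X := fun n => Classical.choose (exists_next hX (chain hX n))
  have hspec : ∀ n, (∀ q ∈ chain hX n, q.1 (p n).2 = 0) ∧ (p n).1 (p n).2 = 1 :=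
    fun n => Classical.choose_spec (exists_next hX (chain hX n))
  refine ⟨fun n => (p n).1, fun n => (p n).2, fun n => (hspec n).2, ?_⟩
  intro m n hmn
  have hmem : p m ∈ chain hX n := by
    have h1 : p m ∈ chain hX (m+1) := by simp [chain, p]
    exact (chain_suffix hX (Nat.succ_le_of_lt hmn)).subset h1
  exact (hspec n).1 _ hmem

end Biorth


/-- A Banach space has a separable quotient if there is a closed linear subspace `Y`
such that the quotient `X ⧸ Y` is infinite-dimensional and separable. -/
def HasSeparableQuotient (X : Type*) [NormedAddCommGroup X] [NormedSpace ℝ X] : Prop :=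
  ∃ Y : Submodule ℝ X, IsClosed (Y : Set X) ∧
    ¬ FiniteDimensional ℝ (X ⧸ Y) ∧ TopologicalSpace.SeparableSpace (X ⧸ Y)

/-- A Banach space is weakly compactly generated if there is a weakly compact subset
whose closed linear span is the whole space. -/
def WeaklyCompactlyGenerated (X : Type*) [NormedAddCommGroup X] [NormedSpace ℝ X] : Prop :=
  ∃ K : Set X, IsCompact (toWeakSpace ℝ X '' K) ∧
    Dense ((Submodule.span ℝ K : Submodule ℝ X) : Set X)

theorem separableQuotient_of_WCG
    (X : Type*) [NormedAddCommGroup X] [NormedSpace ℝ X] [CompleteSpace X]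
    (hX : ¬ FiniteDimensional ℝ X) (hwcg : WeaklyCompactlyGenerated X) :
    HasSeparableQuotient X := by
  obtain ⟨K, hKcomp, hKdense⟩ := hwcg
  obtain ⟨f, x, hfx1, hfx0⟩ := exists_triangular_system hX
  set Y : Submodule ℝ X := ⨅ n, LinearMap.ker (f n : X →ₗ[ℝ] ℝ) with hY
  have hYclosed : IsClosed (Y : Set X) := by
    rw [hY, Submodule.coe_iInf]
    exact isClosed_iInter fun n => ContinuousLinearMap.isClosed_ker (f n)
  -- the quotient map, as a continuous linear map
  let q : X →L[ℝ] X ⧸ Y := LinearMap.mkContinuous Y.mkQ 1 (fun m => by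
    simpa using Submodule.Quotient.norm_mk_le Y m)
  -- the lifted functionals on the quotient
  have hle : ∀ n, Y ≤ LinearMap.ker (f n : X →ₗ[ℝ] ℝ) := fun n => iInf_le _ n
  let fbarl : ℕ → (X ⧸ Y →ₗ[ℝ] ℝ) := fun n => Y.liftQ (f n : X →ₗ[ℝ] ℝ) (hle n)
  have hfbarl_mk : ∀ n (m : X), fbarl n (Y.mkQ m) = f n m := fun n m => rfl
  have hfbar_bound : ∀ n (ξ : X ⧸ Y), ‖fbarl n ξ‖ ≤ ‖f n‖ * ‖ξ‖ := by
    intro n ξ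
    refine le_of_forall_pos_le_add ?_
    intro ε hε
    have hfn : (0:ℝ) ≤ ‖f n‖ := norm_nonneg _
    have hε' : 0 < ε / (‖f n‖ + 1) := by positivity
    obtain ⟨m, hm, hmn⟩ := Submodule.Quotient.norm_mk_lt ξ hε'
    have h1 : fbarl n ξ = f n m := by rw [← hm]; exact hfbarl_mk n m
    have h2 : ‖f n m‖ ≤ ‖f n‖ * ‖m‖ := (f n).le_opNorm m
    have h3 : ‖f n‖ * ‖m‖ ≤ ‖f n‖ * (‖ξ‖ + ε / (‖f n‖ + 1)) :=
      mul_le_mul_of_nonneg_left hmn.le hfn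
    have h4 : ‖f n‖ * (ε / (‖f n‖ + 1)) ≤ ε := by
      rw [mul_div_assoc']
      rw [div_le_iff₀ (by positivity)]
      nlinarith
    rw [h1]
    nlinarith [norm_nonneg m]
  let fbar : ℕ → (X ⧸ Y →L[ℝ] ℝ) := fun n => LinearMap.mkContinuous (fbarl n) ‖f n‖ (hfbar_bound n)
  have hfbar_mk : ∀ n (m : X), fbar n (Y.mkQ m) = f n m := fun n m => rfl
  -- the functionals fbar separate points of the quotient
  have hsep : ∀ ξ : X ⧸ Y, (∀ n, fbar n ξ = 0) → ξ = 0 := by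
    intro ξ hξ
    obtain ⟨m, rfl⟩ := Submodule.Quotient.mk_surjective Y ξ
    rw [Submodule.Quotient.mk_eq_zero]
    rw [hY, Submodule.mem_iInf]
    intro n
    rw [LinearMap.mem_ker]
    have := hξ n
    rwa [show (Submodule.Quotient.mk m : X ⧸ Y) = Y.mkQ m from rfl, hfbar_mk] at this
  refine ⟨Y, hYclosed, ?_, ?_⟩
  · -- infinite dimensional quotient
    intro hfin
    have hli : LinearIndependent ℝ (fun n : ℕ => Y.mkQ (x n)) := by
      rw [linearIndependent_iff']
      intro s g hsum i
      induction i using Nat.strong_induction_on with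
      | _ i IH =>
        intro hi
        have h1 : fbar i (∑ j ∈ s, g j • Y.mkQ (x j)) = 0 := by rw [hsum, map_zero]
        rw [map_sum] at h1
        have h2 : ∀ j ∈ s, j ≠ i → fbar i (g j • Y.mkQ (x j)) = 0 := by
          intro j hj hji
          rcases lt_or_gt_of_ne hji with h | h
          · rw [IH j h hj, zero_smul, map_zero]
          · rw [map_smul, hfbar_mk, hfx0 i j h, smul_zero]
        rw [Finset.sum_eq_single_of_mem i hi h2] at h1
        rw [map_smul, hfbar_mk, hfx1 i, smul_eq_mul, mul_one] at h1
        exact h1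
    exact Module.Finite.not_linearIndependent_of_infinite _ hli
  · -- separable quotient
    let S : Set (WeakSpace ℝ (X ⧸ Y)) := WeakSpace.map q '' (toWeakSpace ℝ X '' K)
    have hScomp : IsCompact S := hKcomp.image (WeakSpace.map q).continuous
    let φ : WeakSpace ℝ (X ⧸ Y) → (ℕ → ℝ) :=
      fun ξ n => fbar n ((toWeakSpace ℝ (X ⧸ Y)).symm ξ)
    have hφcont : Continuous φ :=
      continuous_pi fun n => WeakBilin.eval_continuous _ (fbar n)
    have hφinj : Function.Injective φ := by
      intro a b hab
      have hz : ∀ n, fbar n ((toWeakSpace ℝ (X ⧸ Y)).symm a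
          - (toWeakSpace ℝ (X ⧸ Y)).symm b) = 0 := by
        intro n
        rw [map_sub]
        have := congrFun hab n
        simpa [φ] using sub_eq_zero_of_eq this
      have h0 := hsep _ hz
      have h1 : (toWeakSpace ℝ (X ⧸ Y)).symm a = (toWeakSpace ℝ (X ⧸ Y)).symm b :=
        sub_eq_zero.mp h0
      exact (toWeakSpace ℝ (X ⧸ Y)).symm.injective h1
    haveI : CompactSpace S := isCompact_iff_compactSpace.mp hScomp
    have hembcont : Continuous (fun ζ : S => φ ζ.1) := hφcont.comp continuous_subtype_val
    have hembinj : Function.Injective (fun ζ : S => φ ζ.1) :=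
      fun a b h => Subtype.ext (hφinj h)
    have hemb := hembcont.isClosedEmbedding hembinj
    haveI : SecondCountableTopology S := hemb.isEmbedding.secondCountableTopology
    obtain ⟨D, hDcount, hDdense⟩ := TopologicalSpace.exists_countable_dense S
    let e : S → X ⧸ Y := fun ζ => (toWeakSpace ℝ (X ⧸ Y)).symm ζ.1
    let D' : Set (X ⧸ Y) := e '' D
    let W : Submodule ℝ (X ⧸ Y) := (Submodule.span ℝ D').topologicalClosure
    have hWclosed : IsClosed (W : Set (X ⧸ Y)) := Submodule.isClosed_topologicalClosure _
    have hSW : ∀ ζ : WeakSpace ℝ (X ⧸ Y), ζ ∈ S → (toWeakSpace ℝ (X ⧸ Y)).symm ζ ∈ W := by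
      intro ζ hζ
      by_contra hnot
      obtain ⟨g, u, hgW, hgζ⟩ := geometric_hahn_banach_closed_point W.convex hWclosed hnot
      have hg0 : ∀ w ∈ W, g w = 0 := by
        intro w hw
        by_contra hne
        have h1 : ((u+1) / g w) • w ∈ W := W.smul_mem _ hw
        have h2 := hgW _ h1
        rw [map_smul, smul_eq_mul, div_mul_cancel₀ _ hne] at h2
        linarith
      have hu0 : 0 < u := by simpa using hgW 0 W.zero_mem
      have hgcont : Continuous fun η : WeakSpace ℝ (X ⧸ Y) =>
          g ((toWeakSpace ℝ (X ⧸ Y)).symm η) := WeakBilin.eval_continuous _ g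
      have hUopen : IsOpen {η : WeakSpace ℝ (X ⧸ Y) |
          u < g ((toWeakSpace ℝ (X ⧸ Y)).symm η)} := isOpen_lt continuous_const hgcont
      have hclosure : ζ ∈ closure (Subtype.val '' D : Set (WeakSpace ℝ (X ⧸ Y))) := by
        have h1 : (⟨ζ, hζ⟩ : S) ∈ closure D := by
          rw [hDdense.closure_eq]; exact mem_univ _
        exact (image_closure_subset_closure_image continuous_subtype_val)
          (mem_image_of_mem _ h1)
      obtain ⟨η, hηU, hηD⟩ := mem_closure_iff.mp hclosure _ hUopen hgζ
      obtain ⟨d, hd, rfl⟩ := hηD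
      have hdW : e d ∈ W :=
        Submodule.le_topologicalClosure _ (Submodule.subset_span (mem_image_of_mem _ hd))
      have hdz := hg0 _ hdW
      have : u < g (e d) := hηU
      rw [hdz] at this
      linarith
    have hqKW : ∀ k ∈ K, Y.mkQ k ∈ W := by
      intro k hk
      have h1 : (WeakSpace.map q) (toWeakSpace ℝ X k) ∈ S :=
        mem_image_of_mem _ (mem_image_of_mem _ hk)
      exact hSW _ h1
    have hWdense : Dense (W : Set (X ⧸ Y)) := by
      have hsub : (Submodule.span ℝ K).map Y.mkQ ≤ W := by
        rw [Submodule.map_span]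
        refine Submodule.span_le.mpr ?_
        rintro _ ⟨k, hk, rfl⟩
        exact hqKW k hk
      have hd : Dense (Y.mkQ '' (Submodule.span ℝ K : Set X)) := by
        intro ξ
        obtain ⟨m, rfl⟩ := Submodule.Quotient.mk_surjective Y ξ
        have h1 : m ∈ closure (Submodule.span ℝ K : Set X) := hKdense m
        have h2 := (image_closure_subset_closure_image q.continuous)
          (mem_image_of_mem _ h1)
        exact h2
      refine hd.mono ?_
      rw [show Y.mkQ '' (Submodule.span ℝ K : Set X)
          = ((Submodule.span ℝ K).map Y.mkQ : Set (X ⧸ Y)) from rfl]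
      exact_mod_cast hsub
    have hspan_dense : Dense ((Submodule.span ℝ D' : Submodule ℝ (X ⧸ Y)) : Set (X ⧸ Y)) := by
      have h1 : Dense (closure ((Submodule.span ℝ D' : Submodule ℝ (X ⧸ Y)) : Set (X ⧸ Y))) := by
        rw [← Submodule.topologicalClosure_coe]
        exact hWdense
      exact dense_closure.mp h1
    have hsepset : TopologicalSpace.IsSeparable
        ((Submodule.span ℝ D' : Submodule ℝ (X ⧸ Y)) : Set (X ⧸ Y)) :=
      ((hDcount.image e).isSeparable).span
    obtain ⟨c, hccount, hcsub⟩ := hsepset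
    refine ⟨⟨c, hccount, fun ξ => ?_⟩⟩
    exact closure_minimal hcsub isClosed_closure (hspan_dense ξ)
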